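/- Fix two distinct primes p and q and an infinite discrete p-toral group S. Let H be the group algebra 𝔽_q[S] (MonoidAlgebra (ZMod q) S), regarded as an abelian group on which S acts by left translation, and let G = H ⋊ S be the corresponding semidirect product. Then G is locally finite, and every finite p-subgroup of G is conjugate in G to a subgroup of the canonical copy of S (the image of the inclusion S → G). -/

import Mathlib

/-- The image of the `p`-adic integers in `ℚ_[p]`, as an additive subgroup. -/
noncomputable def padicIntAddSubgroup (p : ℕ) [Fact p.Prime] : AddSubgroup ℚ_[p] :=
  (PadicInt.Coe.ringHom (p := p)).toAddMonoidHom.range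

/-- The Prüfer `p`-group `ℤ(p^∞)`, realized as `ℚ_[p] ⧸ ℤ_[p]`. -/
abbrev ZpInfty (p : ℕ) [Fact p.Prime] : Type :=
  ℚ_[p] ⧸ padicIntAddSubgroup p

/-- The discrete `p`-torus of rank `r`. -/
abbrev DiscretePTorus (p : ℕ) [Fact p.Prime] (r : ℕ) : Type :=
  Fin r → ZpInfty p

/-- A group `S` is discrete `p`-toral if it has a normal subgroup of finite `p`-power
index that is isomorphic to a discrete `p`-torus. -/
def IsDiscretePToral (p : ℕ) [Fact p.Prime] (S : Type*) [Group S] : Prop :=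
  ∃ T : Subgroup S, T.Normal ∧ (∃ n : ℕ, T.index = p ^ n) ∧
    ∃ r : ℕ, Nonempty (T ≃* Multiplicative (DiscretePTorus p r))

noncomputable def leftTranslationAddAut (q : ℕ) (S : Type*) [Group S] :
    S →* Multiplicative (AddAut (MonoidAlgebra (ZMod q) S)) :=
  (DistribMulAction.toAddAut (MonoidAlgebra (ZMod q) S)ˣ (MonoidAlgebra (ZMod q) S)).comp
    (MonoidAlgebra.of (ZMod q) S).toHomUnits

noncomputable def leftTranslationMulAut (q : ℕ) (S : Type*) [Group S] :
    S →* MulAut (Multiplicative (MonoidAlgebra (ZMod q) S)) where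
  toFun s := AddEquiv.toMultiplicative (Multiplicative.toAdd (leftTranslationAddAut q S s))
  map_one' := by ext x; simp only [map_one]; rfl
  map_mul' a b := by ext x; simp only [map_mul]; rfl

abbrev GroupAlgebraSemidirect (q : ℕ) (S : Type*) [Group S] : Type _ :=
  Multiplicative (MonoidAlgebra (ZMod q) S) ⋊[leftTranslationMulAut q S] S

/-! ### Auxiliary lemmas -/

/-- Local finiteness predicate for groups. -/
def LocFinGrp (G : Type*) [Group G] : Prop := ∀ K : Subgroup G, K.FG → Finite K

theorem Subgroup.FG.map' {G G' : Type*} [Group G] [Group G'] {K : Subgroup G}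
    (h : K.FG) (f : G →* G') : (K.map f).FG := by
  obtain ⟨s, hs⟩ := (Subgroup.fg_iff K).mp h
  exact (Subgroup.fg_iff _).mpr ⟨f '' s, by rw [← MonoidHom.map_closure, hs.1], hs.2.image f⟩

theorem locFinGrp_of_injective {G G' : Type*} [Group G] [Group G'] (f : G →* G')
    (hf : Function.Injective f) (h : LocFinGrp G') : LocFinGrp G := by
  intro K hK
  have : Finite (K.map f) := h _ (hK.map' f)
  exact Finite.of_equiv _ (K.equivMapOfInjective f hf).symm.toEquiv

theorem finite_of_locFinGrp_fg {G : Type*} [Group G] (h : LocFinGrp G) (hfg : Group.FG G) :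
    Finite G := by
  have : Finite (⊤ : Subgroup G) := h ⊤ ((Group.fg_iff_subgroup_fg ⊤).mp
    (Group.fg_of_surjective (f := Subgroup.topEquiv.symm.toMonoidHom)
      (fun x => ⟨Subgroup.topEquiv x, Subgroup.topEquiv.symm_apply_apply x⟩)))
  exact Finite.of_equiv _ Subgroup.topEquiv.toEquiv

theorem finite_of_subgroup_finite_index {G : Type*} [Group G] (M : Subgroup G)
    (h1 : Finite M) (h2 : M.index ≠ 0) : Finite G := by
  have h3 : Nat.card M ≠ 0 := Nat.card_ne_zero.mpr ⟨⟨⟨1, M.one_mem⟩⟩, h1⟩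
  exact Nat.finite_of_card_ne_zero (by rw [← M.card_mul_index]; exact mul_ne_zero h3 h2)

open Monoid in
theorem locFinGrp_of_torsion {G : Type*} [CommGroup G] (h : Monoid.IsTorsion G) :
    LocFinGrp G := by
  intro K hK
  haveI : Group.FG K := (Group.fg_iff_subgroup_fg K).mpr hK
  exact CommGroup.finite_of_fg_torsion K (IsTorsion.subgroup h K)

theorem finite_of_fg_of_locFin_subgroup {G G' : Type*} [Group G] [Group G'] [Group.FG G]
    (M : Subgroup G) (hidx : M.index ≠ 0) (f : ↥M →* G') (hf : Function.Injective f)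
    (h' : LocFinGrp G') : Finite G := by
  haveI : M.FiniteIndex := ⟨hidx⟩
  haveI : Group.FG ↥M := Subgroup.fg_of_index_ne_zero M
  exact finite_of_subgroup_finite_index M
    (finite_of_locFinGrp_fg (locFinGrp_of_injective f hf h') inferInstance) hidx

theorem zpInfty_torsion (p : ℕ) [hp : Fact p.Prime] :
    AddMonoid.IsTorsion (ZpInfty p) := by
  intro x
  induction x using QuotientAddGroup.induction_on with
  | H y =>
    obtain ⟨k, hk⟩ : ∃ k : ℕ, ‖y‖ ≤ (p : ℝ) ^ k := by
      obtain ⟨k, hk⟩ := pow_unbounded_of_one_lt ‖y‖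
        (by exact_mod_cast hp.out.one_lt : (1:ℝ) < (p:ℝ))
      exact ⟨k, hk.le⟩
    refine isOfFinAddOrder_iff_nsmul_eq_zero.mpr ⟨p ^ k, pow_pos hp.out.pos k, ?_⟩
    have : ((p ^ k : ℕ) • (QuotientAddGroup.mk y : ZpInfty p))
        = QuotientAddGroup.mk ((p ^ k : ℕ) • y) := rfl
    rw [this, QuotientAddGroup.eq_zero_iff]
    have hnorm : ‖(p ^ k : ℕ) • y‖ ≤ 1 := by
      rw [nsmul_eq_mul, norm_mul]
      push_cast
      rw [norm_pow, Padic.norm_p]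
      calc ((p:ℝ)⁻¹) ^ k * ‖y‖ ≤ ((p:ℝ)⁻¹) ^ k * (p:ℝ) ^ k := by
            apply mul_le_mul_of_nonneg_left hk (by positivity)
        _ = 1 := by
            rw [← mul_pow, inv_mul_cancel₀ (by exact_mod_cast hp.out.pos.ne'), one_pow]
    exact ⟨⟨_, hnorm⟩, rfl⟩

theorem torus_torsion (p : ℕ) [Fact p.Prime] (r : ℕ) :
    AddMonoid.IsTorsion (DiscretePTorus p r) := by
  intro x
  choose n hn hx using fun i => isOfFinAddOrder_iff_nsmul_eq_zero.mp (zpInfty_torsion p (x i))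
  refine isOfFinAddOrder_iff_nsmul_eq_zero.mpr
    ⟨∏ i, n i, Finset.prod_pos (fun i _ => hn i), funext fun i => ?_⟩
  obtain ⟨t, ht⟩ := Finset.dvd_prod_of_mem n (Finset.mem_univ i)
  show (∏ j, n j) • x i = 0
  rw [ht, mul_comm, mul_smul, hx i, smul_zero]

theorem mult_torsion {A : Type*} [AddGroup A] (h : AddMonoid.IsTorsion A) :
    Monoid.IsTorsion (Multiplicative A) := fun x => h x.toAdd

theorem locFinGrp_of_discretePToral {p : ℕ} [Fact p.Prime] {S : Type*} [Group S]
    (hS : IsDiscretePToral p S) : LocFinGrp S := by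
  obtain ⟨T, hTnorm, ⟨n, hidx⟩, r, ⟨e⟩⟩ := hS
  intro K hK
  haveI : Group.FG ↥K := (Group.fg_iff_subgroup_fg K).mpr hK
  have hM : (T.subgroupOf K).index ≠ 0 := by
    have h1 : T.relIndex K ∣ T.index := Subgroup.relIndex_dvd_index_of_normal T K
    intro h0
    have : T.index = 0 := Nat.eq_zero_of_zero_dvd (h0 ▸ h1)
    rw [hidx] at this
    exact pow_ne_zero n (Fact.out : p.Prime).pos.ne' this
  have hmem : ∀ x : ↥(T.subgroupOf K), (K.subtype.comp (T.subgroupOf K).subtype) x ∈ T :=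
    fun x => Subgroup.mem_subgroupOf.mp x.2
  set g : ↥(T.subgroupOf K) →* ↥T :=
    MonoidHom.codRestrict (K.subtype.comp (T.subgroupOf K).subtype) T hmem with hg
  have hginj : Function.Injective (e.toMonoidHom.comp g) := by
    intro a b hab
    have := congrArg Subtype.val (e.injective hab)
    exact Subtype.ext (Subtype.ext this)
  exact finite_of_fg_of_locFin_subgroup (T.subgroupOf K) hM (e.toMonoidHom.comp g) hginj
    (locFinGrp_of_torsion (mult_torsion (torus_torsion p r)))

/-- Let `p ≠ q` be primes and `S` an infinite discrete `p`-toral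
group.  Let `G = 𝔽_q[S] ⋊ S`.  Then `G` is locally finite, and every finite
`p`-subgroup of `G` is conjugate in `G` to a subgroup of the canonical copy of `S`. -/
theorem groupAlgebraSemidirect_locallyFinite_and_finite_pSubgroups_conjugate
    (p q : ℕ) [Fact p.Prime] [Fact q.Prime] (hpq : p ≠ q)
    (S : Type*) [Group S] (hS : IsDiscretePToral p S) (hinf : Infinite S) :
    (∀ K : Subgroup (GroupAlgebraSemidirect q S), K.FG → Finite K) ∧
    (∀ P : Subgroup (GroupAlgebraSemidirect q S), IsPGroup p P → Finite P →
      ∃ g : GroupAlgebraSemidirect q S,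
        Subgroup.map (MulAut.conj g).toMonoidHom P ≤
          (SemidirectProduct.inr (φ := leftTranslationMulAut q S)).range) := by
  classical
  set φ : GroupAlgebraSemidirect q S →* S := SemidirectProduct.rightHom with hφdef
  have hHtor : AddMonoid.IsTorsion (MonoidAlgebra (ZMod q) S) := by
    intro f
    refine isOfFinAddOrder_iff_nsmul_eq_zero.mpr ⟨q, (Fact.out : q.Prime).pos, ?_⟩
    rw [← Nat.cast_smul_eq_nsmul (ZMod q), ZMod.natCast_self, zero_smul]
  have hlocH : LocFinGrp (Multiplicative (MonoidAlgebra (ZMod q) S)) :=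
    locFinGrp_of_torsion (mult_torsion hHtor)
  have hlocS : LocFinGrp S := locFinGrp_of_discretePToral hS
  constructor
  · -- local finiteness
    intro K hK
    haveI : Group.FG ↥K := (Group.fg_iff_subgroup_fg K).mpr hK
    set ψ : ↥K →* S := φ.comp K.subtype with hψdef
    have hz : ∀ x : ↥ψ.ker, (((x : ↥K) : GroupAlgebraSemidirect q S)).right = 1 := fun x => x.2
    have hker_idx : ψ.ker.index ≠ 0 := by
      rw [Subgroup.index_ker]
      have hr : ψ.range = K.map φ := by
        rw [hψdef, MonoidHom.range_comp, Subgroup.range_subtype]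
      have : Finite ψ.range := hr ▸ hlocS _ (hK.map' φ)
      exact Nat.card_ne_zero.mpr ⟨⟨⟨1, ψ.range.one_mem⟩⟩, this⟩
    refine finite_of_fg_of_locFin_subgroup ψ.ker hker_idx
      ({ toFun := fun x => (((x : ↥K) : GroupAlgebraSemidirect q S)).left
         map_one' := rfl
         map_mul' := ?_ }) ?_ hlocH
    · intro a b
      show (((a : ↥K) : GroupAlgebraSemidirect q S) * ((b : ↥K) : GroupAlgebraSemidirect q S)).left = _
      rw [SemidirectProduct.mul_left, hz a, map_one, MulAut.one_apply]
    · intro a b hab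
      have hr : (((a : ↥K) : GroupAlgebraSemidirect q S)).right = (((b : ↥K) : GroupAlgebraSemidirect q S)).right := by rw [hz a, hz b]
      exact Subtype.ext (Subtype.ext (SemidirectProduct.ext hab hr))
  · -- conjugation of finite p-subgroups
    intro P hP hfin
    set ψ : ↥P →* S := φ.comp P.subtype with hψdef
    have hq1 : ∀ m : Multiplicative (MonoidAlgebra (ZMod q) S), m ^ q = 1 := by
      intro m
      have h0 : q • m.toAdd = 0 := by
        rw [← Nat.cast_smul_eq_nsmul (ZMod q), ZMod.natCast_self, zero_smul]
      exact Multiplicative.toAdd.injective (by simpa using h0)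
    haveI : Fintype ↥P := Fintype.ofFinite _
    obtain ⟨k, hk⟩ := IsPGroup.exists_card_eq hP
    have hu : ((Nat.card ↥P : ZMod q)) ≠ 0 := by
      rw [Ne, ZMod.natCast_eq_zero_iff, hk]
      intro hdvd
      exact hpq (((Nat.prime_dvd_prime_iff_eq (Fact.out : q.Prime)
        (Fact.out : p.Prime)).mp ((Fact.out : q.Prime).dvd_of_dvd_pow hdvd)).symm)
    set u : ZMod q := ((Nat.card ↥P : ZMod q))⁻¹ with hudef
    set A := MonoidAlgebra (ZMod q) S
    set of : S →* A := (MonoidAlgebra.of (ZMod q) S : S →* A) with hofdef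
    have hact : ∀ (s : S) (m : Multiplicative A),
        Multiplicative.toAdd (leftTranslationMulAut q S s m) = of s * Multiplicative.toAdd m :=
      fun s m => rfl
    set a : ↥P → A := fun g => Multiplicative.toAdd (((g : GroupAlgebraSemidirect q S)).left) with hadef
    set T0 : A := ∑ g : ↥P, a g with hT0def
    set c : A := u • T0 with hcdef
    have key : ∀ g : ↥P, a g = c - of (((g : GroupAlgebraSemidirect q S)).right) * c := by
      intro g
      have h1 : ∑ h : ↥P, a (g * h) = T0 :=
        Fintype.sum_bijective (fun h => g * h) (Group.mulLeft_bijective g) _ _ (fun h => rfl)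
      have h2 : ∀ h : ↥P, a (g * h) = a g + of (((g : GroupAlgebraSemidirect q S)).right) * a h := by
        intro h
        show Multiplicative.toAdd (((g : GroupAlgebraSemidirect q S) * (h : GroupAlgebraSemidirect q S)).left) = _
        rw [SemidirectProduct.mul_left, toAdd_mul, hact]
      rw [Finset.sum_congr rfl (fun h _ => h2 h), Finset.sum_add_distrib,
        Finset.sum_const, ← Finset.mul_sum, ← hT0def] at h1
      have h3 : (Nat.card ↥P : ZMod q) • a g = T0 - of (((g : GroupAlgebraSemidirect q S)).right) * T0 := by
        rw [Nat.cast_smul_eq_nsmul, Nat.card_eq_fintype_card, ← Finset.card_univ]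
        exact eq_sub_of_add_eq h1
      have h4 : a g = u • ((Nat.card ↥P : ZMod q) • a g) := by
        rw [smul_smul, hudef, inv_mul_cancel₀ hu, one_smul]
      rw [h4, h3, smul_sub, hcdef, mul_smul_comm]
    refine ⟨SemidirectProduct.inl (Multiplicative.ofAdd (-c)), ?_⟩
    rintro y ⟨x, hxP, rfl⟩
    set z : GroupAlgebraSemidirect q S := SemidirectProduct.inl (φ := leftTranslationMulAut q S)
      (Multiplicative.ofAdd (-c)) with hzdef
    have h5 : Multiplicative.toAdd x.left = c - of x.right * c := key ⟨x, hxP⟩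
    have hcomp : Multiplicative.ofAdd (-c) * x.left *
        (leftTranslationMulAut q S x.right) (Multiplicative.ofAdd (-c))⁻¹ = 1 := by
      apply Multiplicative.toAdd.injective
      rw [toAdd_mul, toAdd_mul, hact, toAdd_inv, toAdd_ofAdd, neg_neg, h5, toAdd_one]
      abel
    have hleft : ((MulAut.conj z).toMonoidHom x).left = 1 := by
      show (z * x * z⁻¹).left = 1
      simp only [SemidirectProduct.mul_left, SemidirectProduct.mul_right,
        SemidirectProduct.inv_left, SemidirectProduct.inv_right, hzdef,
        SemidirectProduct.left_inl, SemidirectProduct.right_inl, one_mul, inv_one,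
        map_one, MulAut.one_apply]
      exact hcomp
    refine ⟨((MulAut.conj z).toMonoidHom x).right, ?_⟩
    conv_rhs => rw [← SemidirectProduct.inl_left_mul_inr_right ((MulAut.conj z).toMonoidHom x)]
    rw [hleft, map_one, one_mul]
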